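/- Let p be an odd prime. The polynomial Y² − Y − (T^p − T), viewed as a polynomial in Y over the rational function field 𝔽_p(T), is irreducible; yet for every t₀ ∈ 𝔽_p, the specialized polynomial Y² − Y − (t₀^p − t₀) ∈ 𝔽_p[Y] splits into linear factors over 𝔽_p (indeed t₀^p − t₀ = 0, so it equals Y(Y − 1)). -/

import Mathlib

open Polynomial

theorem artinSchreier_example_irreducible_but_splits_at_all_points
    (p : ℕ) [Fact p.Prime] (hodd : Odd p) :
    Irreducible
      (Polynomial.X ^ 2 - Polynomial.X -
        Polynomial.C ((RatFunc.X : RatFunc (ZMod p)) ^ p - RatFunc.X)) ∧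
    ∀ t₀ : ZMod p,
      (Polynomial.X ^ 2 - Polynomial.X - Polynomial.C (t₀ ^ p - t₀) :
          Polynomial (ZMod p)).Splits ∧
      (Polynomial.X ^ 2 - Polynomial.X - Polynomial.C (t₀ ^ p - t₀) :
          Polynomial (ZMod p)) =
        Polynomial.X * (Polynomial.X - 1) := by
  have hp : p.Prime := Fact.out
  have hp2 : 2 ≤ p := hp.two_le
  constructor
  · set a : RatFunc (ZMod p) := RatFunc.X ^ p - RatFunc.X with ha
    set q : Polynomial (RatFunc (ZMod p)) := X ^ 2 - X - C a with hq
    have hdeg : q.natDegree = 2 := by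
      rw [hq]; compute_degree!
    rw [irreducible_iff_roots_eq_zero_of_degree_le_three (by omega) (by omega)]
    by_contra h
    obtain ⟨y, hy⟩ := Multiset.exists_mem_of_ne_zero h
    have hq0 : q ≠ 0 := fun h0 => by simp [h0] at hdeg
    have hroot : y ^ 2 - y - a = 0 := by
      have := (mem_roots hq0).mp hy
      simpa [hq, IsRoot] using this
    -- y is integral over (ZMod p)[X]
    have hint : IsIntegral (Polynomial (ZMod p)) y := by
      refine ⟨X ^ 2 - X - C (X ^ p - X), ?_, ?_⟩
      · rw [sub_sub]
        apply monic_X_pow_sub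
        apply lt_of_le_of_lt (degree_add_le _ _)
        simp only [degree_X, degree_C_le]
        exact max_lt (by norm_num) (lt_of_le_of_lt degree_C_le (by norm_num))
      · have hX : algebraMap (Polynomial (ZMod p)) (RatFunc (ZMod p)) X = RatFunc.X :=
          RatFunc.algebraMap_X
        simp only [eval₂_sub, eval₂_pow, eval₂_X, eval₂_C, map_sub, map_pow, hX]
        rw [ha] at hroot
        linear_combination hroot
    obtain ⟨f, hf⟩ := IsIntegrallyClosed.isIntegral_iff.mp hint
    have hinj : Function.Injective (algebraMap (Polynomial (ZMod p)) (RatFunc (ZMod p))) :=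
      IsFractionRing.injective _ _
    have heq : f ^ 2 - f = X ^ p - X := by
      apply hinj
      have hX : algebraMap (Polynomial (ZMod p)) (RatFunc (ZMod p)) X = RatFunc.X :=
        RatFunc.algebraMap_X
      simp only [map_sub, map_pow, hX, hf]
      linear_combination hroot
    have hdr : (X ^ p - X : Polynomial (ZMod p)).natDegree = p := by
      rw [natDegree_sub_eq_left_of_natDegree_lt (by simp; omega)]
      simp
    rcases Nat.eq_zero_or_pos f.natDegree with h0 | h1
    · have : (f ^ 2 - f).natDegree = 0 := by
        apply Nat.le_antisymm _ (Nat.zero_le _)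
        apply le_trans (natDegree_sub_le _ _)
        simp [natDegree_pow, h0]
      rw [heq, hdr] at this
      omega
    · have h2 : (f ^ 2 - f).natDegree = 2 * f.natDegree := by
        rw [natDegree_sub_eq_left_of_natDegree_lt (by rw [natDegree_pow]; omega),
          natDegree_pow]
      rw [heq, hdr] at h2
      obtain ⟨k, hk⟩ := hodd
      omega
  · intro t₀
    have ht : t₀ ^ p - t₀ = 0 := by rw [ZMod.pow_card]; ring
    have he : (X ^ 2 - X - C (t₀ ^ p - t₀) : Polynomial (ZMod p)) = X * (X - 1) := by
      rw [ht]; ring_nf; rw [map_zero]; ring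
    refine ⟨?_, he⟩
    rw [he]
    apply Splits.mul Splits.X
    have : (X - 1 : Polynomial (ZMod p)) = X - C 1 := by norm_num
    rw [this]
    exact Splits.X_sub_C _
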